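/- arXiv:1905.06881 — 2 statements merged into one kernel-verified Lean document; each statement's English description precedes it below -/
import Mathlib

section
/- For every integer M ≥ 1 and every real number p with 0 < p ≤ 1, the inequality Σ_{k=1}^{M} C(M,k) (−1)^{k+1} / (1 − (1−p)^k) ≤ 1 / p^M holds, where C(M,k) denotes the binomial coefficient. -/
open Finset

private lemma keyA (M : ℕ) (p x : ℝ) (hp0 : 0 ≤ p) (hp1 : p ≤ 1)
    (hx0 : 0 ≤ x) (hx1 : x ≤ 1) :
    p ^ M + (1 - p ^ M) * x ^ M ≤ (p + (1 - p) * x) ^ M := by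
  induction M with
  | zero => simp
  | succ n ih =>
    have hpx0 : 0 ≤ p + (1 - p) * x := by nlinarith
    have hpn0 : 0 ≤ p ^ n := pow_nonneg hp0 n
    have hpn1 : p ^ n ≤ 1 := pow_le_one₀ hp0 hp1
    have hxn0 : 0 ≤ x ^ n := pow_nonneg hx0 n
    have hxn1 : x ^ n ≤ 1 := pow_le_one₀ hx0 hx1
    have key1 : (0:ℝ) ≤ x ^ n - x ^ n * x := by nlinarith [mul_nonneg hxn0 (by linarith : (0:ℝ) ≤ 1 - x)]
    have key2 : (0:ℝ) ≤ x - x ^ n * x := by nlinarith [mul_nonneg hx0 (by linarith : (0:ℝ) ≤ 1 - x ^ n)]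
    calc p ^ (n+1) + (1 - p ^ (n+1)) * x ^ (n+1)
        ≤ (p + (1-p)*x) * (p ^ n + (1 - p ^ n) * x ^ n) := by
          rw [pow_succ, pow_succ]
          nlinarith [mul_nonneg (mul_nonneg hp0 (by linarith : (0:ℝ) ≤ 1 - p ^ n)) key1,
            mul_nonneg (mul_nonneg (by linarith : (0:ℝ) ≤ 1 - p) hpn0) key2]
      _ ≤ (p + (1-p)*x) * (p + (1-p)*x) ^ n := mul_le_mul_of_nonneg_left ih hpx0
      _ = (p + (1-p)*x) ^ (n+1) := by ring

private lemma keyB (M n : ℕ) (p : ℝ) (hp0 : 0 ≤ p) (hp1 : p ≤ 1) :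
    1 - (1 - p ^ M) ^ n ≤ (1 - (1 - p) ^ n) ^ M := by
  induction n with
  | zero =>
    simp only [pow_zero, sub_self]
    exact pow_nonneg le_rfl M
  | succ n ih =>
    have hq0 : 0 ≤ (1 - p) ^ n := pow_nonneg (by linarith) n
    have hq1 : (1 - p) ^ n ≤ 1 := pow_le_one₀ (by linarith) (by linarith)
    have hpM0 : 0 ≤ p ^ M := pow_nonneg hp0 M
    have hpM1 : p ^ M ≤ 1 := pow_le_one₀ hp0 hp1
    have hA := keyA M p (1 - (1 - p) ^ n) hp0 hp1 (by linarith) (by linarith)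
    have hstep : p ^ M + (1 - p ^ M) * (1 - (1 - p ^ M) ^ n)
        ≤ p ^ M + (1 - p ^ M) * (1 - (1 - p) ^ n) ^ M := by
          nlinarith [mul_le_mul_of_nonneg_left ih (by linarith : (0:ℝ) ≤ 1 - p ^ M)]
    have hrw : (p + (1 - p) * (1 - (1 - p) ^ n)) = 1 - (1 - p) ^ (n + 1) := by ring
    have : 1 - (1 - p ^ M) ^ (n + 1)
        = p ^ M + (1 - p ^ M) * (1 - (1 - p ^ M) ^ n) := by ring
    rw [this]
    calc p ^ M + (1 - p ^ M) * (1 - (1 - p ^ M) ^ n)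
        ≤ p ^ M + (1 - p ^ M) * (1 - (1 - p) ^ n) ^ M := hstep
      _ ≤ (p + (1 - p) * (1 - (1 - p) ^ n)) ^ M := hA
      _ = (1 - (1 - p) ^ (n + 1)) ^ M := by rw [hrw]

private lemma binom_id (M : ℕ) (y : ℝ) :
    ∑ k ∈ Icc 1 M, (M.choose k : ℝ) * (-1) ^ (k + 1) * y ^ k = 1 - (1 - y) ^ M := by
  have hset : range (M + 1) = insert 0 (Icc 1 M) := by
    ext x; simp only [mem_range, mem_insert, mem_Icc]; omega
  have hins := add_pow (-y) 1 M
  rw [hset, Finset.sum_insert (by simp)] at hins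
  have h0 : (-y) ^ 0 * (1:ℝ) ^ (M - 0) * (M.choose 0 : ℝ) = 1 := by simp
  rw [h0] at hins
  have hterm : ∀ k ∈ Icc 1 M, (M.choose k : ℝ) * (-1) ^ (k + 1) * y ^ k
      = -((-y) ^ k * (1:ℝ) ^ (M - k) * (M.choose k : ℝ)) := by
    intro k _
    rw [neg_pow]
    ring
  rw [Finset.sum_congr rfl hterm, Finset.sum_neg_distrib]
  have : (-y + 1 : ℝ) = 1 - y := by ring
  rw [this] at hins
  linarith

/-- For every integer `M ≥ 1` and every real `0 < p ≤ 1`,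
`Σ_{k=1}^M C(M,k) (-1)^(k+1) / (1 - (1-p)^k) ≤ 1 / p^M`. -/
theorem expected_max_le_memoryless
    (M : ℕ) (hM : 1 ≤ M) (p : ℝ) (hp0 : 0 < p) (hp1 : p ≤ 1) :
    ∑ k ∈ Finset.Icc 1 M, (M.choose k : ℝ) * (-1) ^ (k + 1) / (1 - (1 - p) ^ k)
      ≤ 1 / p ^ M := by
  set q : ℝ := 1 - p with hqdef
  have hq0 : 0 ≤ q := by simp [hqdef]; linarith
  have hq1 : q < 1 := by simp [hqdef]; linarith
  have hqk : ∀ k : ℕ, k ∈ Icc 1 M → 0 ≤ q ^ k ∧ q ^ k < 1 := by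
    intro k hk
    rw [mem_Icc] at hk
    refine ⟨pow_nonneg hq0 k, ?_⟩
    calc q ^ k ≤ q ^ 1 := pow_le_pow_of_le_one hq0 hq1.le hk.1
      _ = q := pow_one q
      _ < 1 := hq1
  -- summability of each geometric series
  have hsumk : ∀ k ∈ Icc 1 M,
      Summable (fun n : ℕ => (M.choose k : ℝ) * (-1) ^ (k + 1) * (q ^ k) ^ n) := by
    intro k hk
    exact (summable_geometric_of_lt_one (hqk k hk).1 (hqk k hk).2).mul_left _
  -- rewrite LHS as iterated sum
  have hLHS : ∑ k ∈ Icc 1 M, (M.choose k : ℝ) * (-1) ^ (k + 1) / (1 - q ^ k)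
      = ∑' n : ℕ, ∑ k ∈ Icc 1 M, (M.choose k : ℝ) * (-1) ^ (k + 1) * (q ^ k) ^ n := by
    rw [Summable.tsum_finsetSum hsumk]
    refine Finset.sum_congr rfl ?_
    intro k hk
    rw [tsum_mul_left, tsum_geometric_of_lt_one (hqk k hk).1 (hqk k hk).2]
    rw [div_eq_mul_inv]
  -- the inner sum identity
  have hinner : ∀ n : ℕ, ∑ k ∈ Icc 1 M, (M.choose k : ℝ) * (-1) ^ (k + 1) * (q ^ k) ^ n
      = 1 - (1 - q ^ n) ^ M := by
    intro n
    have : ∀ k ∈ Icc 1 M, (M.choose k : ℝ) * (-1) ^ (k + 1) * (q ^ k) ^ n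
        = (M.choose k : ℝ) * (-1) ^ (k + 1) * (q ^ n) ^ k := by
      intro k _
      rw [← pow_mul, mul_comm k n, pow_mul]
    rw [Finset.sum_congr rfl this, binom_id]
  -- RHS as geometric series
  have hpM0 : 0 < p ^ M := pow_pos hp0 M
  have hpM1 : p ^ M ≤ 1 := pow_le_one₀ hp0.le hp1
  have hRHS : (1 : ℝ) / p ^ M = ∑' n : ℕ, (1 - p ^ M) ^ n := by
    rw [tsum_geometric_of_lt_one (by linarith) (by linarith)]
    rw [one_div]
    congr 1
    ring
  rw [hLHS, hRHS]
  refine Summable.tsum_le_tsum ?_ ?_ ?_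
  · intro n
    rw [hinner n]
    have := keyB M n p hp0.le hp1
    rw [← hqdef] at this
    linarith
  · exact summable_sum hsumk
  · exact summable_geometric_of_lt_one (by linarith) (by linarith)
end

section
/- Let M ≥ 1 and 0 < p ≤ 1, and let N_1, …, N_M be independent, identically distributed geometric random variables on the positive integers with Pr[N_i = k] = p(1−p)^{k−1} for k ≥ 1. Then E[max{N_1, …, N_M}] ≤ 1 / p^M. -/
open MeasureTheory ProbabilityTheory
open scoped ProbabilityTheory ENNReal

/-- Key real inequality: `(m+1) p^m ≤ 1 + m p^(m+1)` for `0 ≤ p ≤ 1`. -/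
lemma aux_real_ineq (p : ℝ) (hp0 : 0 ≤ p) (hp1 : p ≤ 1) :
    ∀ m : ℕ, (m + 1 : ℝ) * p ^ m ≤ 1 + (m : ℝ) * p ^ (m + 1) := by
  intro m
  induction m with
  | zero => simp
  | succ m ih =>
    have h1 : (m + 1 : ℝ) * p ^ (m + 1) ≤ p + (m : ℝ) * p ^ (m + 2) := by
      have := mul_le_mul_of_nonneg_left ih hp0
      calc (m + 1 : ℝ) * p ^ (m + 1) = p * ((m + 1 : ℝ) * p ^ m) := by ring
        _ ≤ p * (1 + (m : ℝ) * p ^ (m + 1)) := this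
        _ = p + (m : ℝ) * p ^ (m + 2) := by ring
    have h2 : p + p ^ (m + 1) ≤ 1 + p ^ (m + 2) := by
      have hfact : 0 ≤ (1 - p) * (1 - p ^ (m + 1)) :=
        mul_nonneg (by linarith) (by nlinarith [pow_le_one₀ hp0 hp1 (n := m + 1)])
      have hps : p ^ (m + 2) = p ^ (m + 1) * p := pow_succ p (m + 1)
      nlinarith [hfact, hps]
    have h3 : (0:ℝ) ≤ p ^ (m + 1) := pow_nonneg hp0 _
    push_cast
    nlinarith

/-- A natural number as `ℝ≥0∞` is the sum of indicators of `k < n`. -/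
lemma nat_cast_eq_tsum (n : ℕ) :
    (n : ℝ≥0∞) = ∑' k : ℕ, if k < n then (1 : ℝ≥0∞) else 0 := by
  rw [tsum_eq_sum (s := Finset.range n) (by intro k hk; simp [Finset.mem_range] at hk; simp [hk]),
    Finset.sum_ite_of_true (fun k hk => Finset.mem_range.mp hk)]
  simp

set_option maxHeartbeats 1000000 in
/-- For `M ≥ 1` i.i.d. geometric random variables `N_1, …, N_M` on the positive integers
with `Pr[N_i = k] = p (1-p)^(k-1)` for `k ≥ 1`, the expectation of the maximum satisfies
`E[max_i N_i] ≤ 1 / p^M`. -/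
theorem max_geometric_expectation_upper_bound
    {Ω : Type*} [MeasureSpace Ω] [IsProbabilityMeasure (ℙ : Measure Ω)]
    (M : ℕ) (hM : 1 ≤ M) (p : ℝ) (hp0 : 0 < p) (hp1 : p ≤ 1)
    (N : Fin M → Ω → ℕ) (hmeas : ∀ i, Measurable (N i))
    (hindep : iIndepFun N ℙ)
    (hgeom : ∀ i, ∀ k : ℕ, 1 ≤ k →
      ℙ {ω | N i ω = k} = ENNReal.ofReal (p * (1 - p) ^ (k - 1))) :
    ∫⁻ ω, ((Finset.univ.sup fun i => N i ω : ℕ) : ℝ≥0∞) ∂ℙ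
      ≤ ENNReal.ofReal (1 / p ^ M) := by
  set q : ℝ := 1 - p with hq
  have hq0 : 0 ≤ q := by linarith
  have hq1 : q < 1 := by linarith
  -- tail bound for each N i
  have tail : ∀ i (k : ℕ), ℙ {ω | k < N i ω} ≤ ENNReal.ofReal (q ^ k) := by
    intro i k
    have hset : {ω | k < N i ω} = ⋃ j : ℕ, {ω | N i ω = j + k + 1} := by
      ext ω
      simp only [Set.mem_setOf_eq, Set.mem_iUnion]
      constructor
      · intro h; exact ⟨N i ω - k - 1, by omega⟩
      · rintro ⟨j, hj⟩; omega
    rw [hset]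
    have hle : ℙ (⋃ j : ℕ, {ω | N i ω = j + k + 1})
        ≤ ∑' j : ℕ, ℙ {ω | N i ω = j + k + 1} := measure_iUnion_le _
    refine hle.trans ?_
    have heq : ∀ j : ℕ, ℙ {ω | N i ω = j + k + 1} = ENNReal.ofReal (p * q ^ (j + k)) := by
      intro j
      rw [hgeom i (j + k + 1) (by omega)]
      norm_num
    simp_rw [heq]
    have hsummable : Summable (fun j : ℕ => p * q ^ (j + k)) := by
      apply Summable.mul_left
      exact (summable_geometric_of_lt_one hq0 hq1).comp_injective (add_left_injective k)
    rw [← ENNReal.ofReal_tsum_of_nonneg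
        (fun j => by positivity) hsummable]
    apply ENNReal.ofReal_le_ofReal
    have : ∑' j : ℕ, p * q ^ (j + k) = p * q ^ k * ∑' j : ℕ, q ^ j := by
      rw [← tsum_mul_left]
      congr 1; ext j; rw [pow_add]; ring
    rw [this, tsum_geometric_of_lt_one hq0 hq1]
    have hp' : 1 - q = p := by linarith
    rw [hp']
    rw [mul_assoc, mul_comm, mul_assoc]
    rw [inv_mul_cancel₀ (ne_of_gt hp0)]
    simp
  -- tail bound for the max via union bound
  have hsets : ∀ k : ℕ, {ω | k < (Finset.univ.sup fun i => N i ω : ℕ)}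
      = ⋃ i : Fin M, {ω | k < N i ω} := by
    intro k
    ext ω
    simp [Finset.lt_sup_iff]
  have tailmax : ∀ k : ℕ, ℙ {ω | k < (Finset.univ.sup fun i => N i ω : ℕ)}
      ≤ (M : ℝ≥0∞) * ENNReal.ofReal (q ^ k) := by
    intro k
    rw [hsets k]
    calc ℙ (⋃ i : Fin M, {ω | k < N i ω}) ≤ ∑' i : Fin M, ℙ {ω | k < N i ω} :=
          measure_iUnion_le _
      _ ≤ ∑' _i : Fin M, ENNReal.ofReal (q ^ k) := ENNReal.tsum_le_tsum fun i => tail i k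
      _ = (M : ℝ≥0∞) * ENNReal.ofReal (q ^ k) := by
          rw [tsum_fintype]; simp [mul_comm]
  -- measurability of the tail sets
  have hmeasset : ∀ k : ℕ, MeasurableSet {ω | k < (Finset.univ.sup fun i => N i ω : ℕ)} := by
    intro k
    rw [hsets k]
    exact MeasurableSet.iUnion fun i => hmeas i measurableSet_Ioi
  -- layer cake: lintegral equals sum of tail probabilities
  have layers : ∫⁻ ω, ((Finset.univ.sup fun i => N i ω : ℕ) : ℝ≥0∞) ∂ℙ
      = ∑' k : ℕ, ℙ {ω | k < (Finset.univ.sup fun i => N i ω : ℕ)} := by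
    have : ∀ ω, ((Finset.univ.sup fun i => N i ω : ℕ) : ℝ≥0∞)
        = ∑' k : ℕ, Set.indicator {ω | k < (Finset.univ.sup fun i => N i ω : ℕ)}
            (1 : Ω → ℝ≥0∞) ω := by
      intro ω
      rw [nat_cast_eq_tsum]
      congr 1
      ext k
      simp [Set.indicator_apply, Set.mem_setOf_eq]
    calc ∫⁻ ω, ((Finset.univ.sup fun i => N i ω : ℕ) : ℝ≥0∞) ∂ℙ
        = ∫⁻ ω, ∑' k : ℕ, Set.indicator {ω | k < (Finset.univ.sup fun i => N i ω : ℕ)}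
            (1 : Ω → ℝ≥0∞) ω ∂ℙ := lintegral_congr this
      _ = ∑' k : ℕ, ∫⁻ ω, Set.indicator {ω | k < (Finset.univ.sup fun i => N i ω : ℕ)}
            (1 : Ω → ℝ≥0∞) ω ∂ℙ :=
          lintegral_tsum (fun k => ((measurable_one.indicator (hmeasset k)).aemeasurable))
      _ = ∑' k : ℕ, ℙ {ω | k < (Finset.univ.sup fun i => N i ω : ℕ)} := by
          refine tsum_congr fun k => ?_
          rw [lintegral_indicator (hmeasset k)]
          simp
  rw [layers]
  -- split off the k = 0 term
  have hsplit : ∑' k : ℕ, ℙ {ω | k < (Finset.univ.sup fun i => N i ω : ℕ)}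
      = ℙ {ω | 0 < (Finset.univ.sup fun i => N i ω : ℕ)}
        + ∑' k : ℕ, ℙ {ω | (k + 1) < (Finset.univ.sup fun i => N i ω : ℕ)} :=
    tsum_eq_zero_add' ENNReal.summable
  rw [hsplit]
  have h0 : ℙ {ω | 0 < (Finset.univ.sup fun i => N i ω : ℕ)} ≤ 1 := prob_le_one
  have hrest : ∑' k : ℕ, ℙ {ω | (k + 1) < (Finset.univ.sup fun i => N i ω : ℕ)}
      ≤ ENNReal.ofReal ((M : ℝ) * q / p) := by
    calc ∑' k : ℕ, ℙ {ω | (k + 1) < (Finset.univ.sup fun i => N i ω : ℕ)}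
        ≤ ∑' k : ℕ, (M : ℝ≥0∞) * ENNReal.ofReal (q ^ (k + 1)) :=
          ENNReal.tsum_le_tsum fun k => tailmax (k + 1)
      _ = (M : ℝ≥0∞) * ENNReal.ofReal (∑' k : ℕ, q ^ (k + 1)) := by
          rw [ENNReal.tsum_mul_left]
          congr 1
          rw [← ENNReal.ofReal_tsum_of_nonneg (fun k => pow_nonneg hq0 _)
            ((summable_geometric_of_lt_one hq0 hq1).comp_injective (add_left_injective 1))]
      _ ≤ ENNReal.ofReal ((M : ℝ) * q / p) := by
          rw [← ENNReal.ofReal_natCast M, ← ENNReal.ofReal_mul (by positivity)]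
          apply ENNReal.ofReal_le_ofReal
          have : ∑' k : ℕ, q ^ (k + 1) = q * ∑' k : ℕ, q ^ k := by
            rw [← tsum_mul_left]; congr 1; ext k; rw [pow_succ']
          rw [this, tsum_geometric_of_lt_one hq0 hq1]
          have hp' : 1 - q = p := by linarith
          rw [hp', mul_div_assoc, div_eq_mul_inv]
  calc ℙ {ω | 0 < (Finset.univ.sup fun i => N i ω : ℕ)}
      + ∑' k : ℕ, ℙ {ω | (k + 1) < (Finset.univ.sup fun i => N i ω : ℕ)}
      ≤ 1 + ENNReal.ofReal ((M : ℝ) * q / p) := add_le_add h0 hrest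
    _ = ENNReal.ofReal (1 + (M : ℝ) * q / p) := by
        rw [ENNReal.ofReal_add (by norm_num) (by positivity)]
        simp
    _ ≤ ENNReal.ofReal (1 / p ^ M) := by
        apply ENNReal.ofReal_le_ofReal
        -- real inequality: 1 + M q / p ≤ 1 / p^M
        obtain ⟨m, rfl⟩ : ∃ m, M = m + 1 := ⟨M - 1, by omega⟩
        have hpM : (0:ℝ) < p ^ (m + 1) := pow_pos hp0 _
        rw [le_div_iff₀ hpM]
        have key := aux_real_ineq p hp0.le hp1 m
        have hps : p ^ (m + 1) = p ^ m * p := pow_succ p m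
        have expand : (1 + ((m + 1 : ℕ) : ℝ) * q / p) * p ^ (m + 1)
            = p ^ (m + 1) + ((m : ℝ) + 1) * q * p ^ m := by
          push_cast
          field_simp
          ring
        rw [expand, hq]
        nlinarith [key, hps]
end
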